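/- In the Kleinberg small-world model KSW(n,d,γ) with γ > 2d: for any fixed ε > 0, the probability that some long-range edge of the random graph connects two vertices at grid distance greater than n^{1/(γ−d)+ε} tends to 0 as n → ∞; equivalently, with probability 1 − o(1) every long-range edge joins vertices at grid distance at most n^{1/(γ−d)+ε}. -/

import Mathlib

open MeasureTheory
open scoped ENNReal

/-- Vertex set of the `d`-dimensional grid with side length `n'` (with wrap-around). -/
abbrev GridV (d n' : ℕ) : Type := Fin d → ZMod n'

instance (d n' : ℕ) : MeasurableSpace (GridV d n') := ⊤

/-- The base grid `B`: `u ~ v` iff they differ by `±1 (mod n')` in exactly one coordinate. -/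
def gridGraph (d n' : ℕ) : SimpleGraph (GridV d n') where
  Adj u v := u ≠ v ∧ ∃ j : Fin d, (v j = u j + 1 ∨ v j = u j - 1) ∧ ∀ i : Fin d, i ≠ j → v i = u i
  symm := by
    constructor
    rintro u v ⟨hne, j, hj, hoth⟩
    refine ⟨hne.symm, j, ?_, fun i hi => (hoth i hi).symm⟩
    rcases hj with h | h
    · right; rw [h]; ring
    · left; rw [h]; ring
  loopless := ⟨fun u h => h.1 rfl⟩

/-- The Kleinberg small-world graph determined by the long-range choices `σ`:
all grid edges, plus the undirected long-range edge `(u, σ u)` for every vertex `u`. -/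
def kswGraph (d n' : ℕ) (σ : GridV d n' → GridV d n') : SimpleGraph (GridV d n') where
  Adj u v := (gridGraph d n').Adj u v ∨ (u ≠ v ∧ (σ u = v ∨ σ v = u))
  symm := by
    constructor
    rintro u v (h | ⟨hne, h⟩)
    · exact Or.inl ((gridGraph d n').adj_symm h)
    · exact Or.inr ⟨hne.symm, h.symm⟩
  loopless := by
    constructor
    rintro u (h | ⟨hne, _⟩)
    · exact (gridGraph d n').irrefl h
    · exact hne rfl

/-- The (unnormalized) weight with which `u` picks `v` as its long-range contact:
`d_B(u,v)^{-γ}`, and `0` for `v = u`. -/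
noncomputable def kswWeight (d n' : ℕ) (γ : ℝ) (u v : GridV d n') : ℝ≥0∞ :=
  if v = u then 0 else ((gridGraph d n').dist u v : ℝ≥0∞) ^ (-γ)

/-- The distribution of the long-range contact of a single vertex `u`:
`v` is chosen with probability proportional to `d_B(u,v)^{-γ}`. -/
noncomputable def kswCoordMeasure (d : ℕ) (n' : ℕ+) (γ : ℝ) (u : GridV d n') :
    Measure (GridV d n') :=
  (∑ v : GridV d n', kswWeight d n' γ u v)⁻¹ •
    ∑ v : GridV d n', kswWeight d n' γ u v • Measure.dirac v

/-- The law of the random graph `KSW(n, d, γ)` (with `n = n'^d`), as the product measure of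
the independent long-range choices of all vertices. -/
noncomputable def kswMeasure (d : ℕ) (n' : ℕ+) (γ : ℝ) :
    Measure (GridV d n' → GridV d n') :=
  Measure.pi fun u => kswCoordMeasure d n' γ u

/-- The normalization function `f`: `f(s) = ln s` if `γ = d`, and `f(s) = s^{d-γ}` if `γ < d`. -/
noncomputable def fKSW (d : ℕ) (γ : ℝ) (s : ℕ) : ℝ :=
  if γ = d then Real.log s else (s : ℝ) ^ ((d : ℝ) - γ)



namespace KSWAux


/-- circular distance to 0 on `ZMod m` -/
def rho {m : ℕ} (z : ZMod m) : ℕ := z.valMinAbs.natAbs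

lemma rho_zero {m : ℕ} : rho (0 : ZMod m) = 0 := by
  simp [rho, ZMod.valMinAbs_zero]

lemma rho_eq_zero_iff {m : ℕ} {z : ZMod m} : rho z = 0 ↔ z = 0 := by
  simp [rho, Int.natAbs_eq_zero, ZMod.valMinAbs_eq_zero]

lemma rho_add_le {m : ℕ} (a b : ZMod m) : rho (a + b) ≤ rho a + rho b :=
  (ZMod.natAbs_valMinAbs_add_le a b).trans (Int.natAbs_add_le _ _)

lemma rho_neg {m : ℕ} (a : ZMod m) : rho (-a) = rho a :=
  ZMod.natAbs_valMinAbs_neg a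

lemma rho_one_le {m : ℕ} : rho (1 : ZMod m) ≤ 1 := by
  by_cases h : (1 : ZMod m) = 0
  · rw [h, rho_zero]; exact Nat.zero_le _
  · rcases m with _ | _ | m
    · simp [rho, ZMod.valMinAbs_def_zero]
    · exact absurd (by decide : (1 : ZMod (0+1)) = 0) h
    · haveI : Fact (1 < m + 2) := ⟨by omega⟩
      have : (1 : ZMod (m+2)).val = 1 := ZMod.val_one _
      rw [rho, ZMod.valMinAbs_def_pos]
      split_ifs <;> simp_all <;> omega

lemma rho_neg_one_le {m : ℕ} : rho (-1 : ZMod m) ≤ 1 := by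
  rw [rho_neg]; exact rho_one_le

lemma rho_cases {m : ℕ} [NeZero m] (z : ZMod m) :
    rho z = z.val ∨ rho z = m - z.val := by
  rw [rho, ZMod.valMinAbs_def_pos]
  have hv : z.val < m := ZMod.val_lt z
  split_ifs with h
  · left; exact Int.natAbs_natCast _
  · right; omega
                

variable {d m : ℕ}


lemma adj_rho {u v : GridV d m} (h : (gridGraph d m).Adj u v) (i : Fin d) :
    rho (v i - u i) ≤ 1 := by
  dsimp only [gridGraph] at h
  obtain ⟨-, j, hj, hoth⟩ := h
  by_cases hij : i = j
  · subst hij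
    rcases hj with h | h <;> rw [h]
    · simpa using rho_one_le
    · simpa using rho_neg_one_le
  · rw [hoth i hij, sub_self, rho_zero]; exact Nat.zero_le _

lemma walk_rho {u v : GridV d m} (W : (gridGraph d m).Walk u v) (i : Fin d) :
    rho (v i - u i) ≤ W.length := by
  induction W with
  | nil => simp [rho_zero]
  | @cons a b c hab W ih =>
      have h1 : rho (c i - a i) ≤ rho (c i - b i) + rho (b i - a i) := by
        have : c i - a i = (c i - b i) + (b i - a i) := by ring
        rw [this]; exact rho_add_le _ _
      have h2 : rho (b i - a i) ≤ 1 := adj_rho hab i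
      simp only [SimpleGraph.Walk.length_cons]
      omega

lemma adj_update (u : GridV d m) (i : Fin d) {c : ZMod m}
    (hne : Function.update u i c ≠ u) (hc : c = u i + 1 ∨ c = u i - 1) :
    (gridGraph d m).Adj u (Function.update u i c) := by
  dsimp only [gridGraph]
  refine ⟨fun h => hne h.symm, i, ?_, fun j hj => Function.update_of_ne hj _ _⟩
  simpa using hc

lemma reach_update [NeZero m] (u : GridV d m) (i : Fin d) (c : ZMod m) :
    (gridGraph d m).Reachable u (Function.update u i c) := by
  have key : ∀ k : ℕ, (gridGraph d m).Reachable u (Function.update u i (u i + (k : ℕ))) := by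
    intro k
    induction k with
    | zero => simpa using SimpleGraph.Reachable.refl u
    | succ k ih =>
        refine ih.trans ?_
        set w := Function.update u i (u i + (k : ℕ)) with hw
        have hww : Function.update u i (u i + ((k+1 : ℕ) : ZMod m)) = Function.update w i (w i + 1) := by
          rw [hw]; simp [Function.update_idem, Function.update_self]
          push_cast; ring
        rw [hww]
        by_cases h : Function.update w i (w i + 1) = w
        · rw [h]
        · exact (adj_update w i h (Or.inl rfl)).reachable
  have : c = u i + ((c - u i).val : ℕ) := by
    rw [ZMod.natCast_val, ZMod.cast_id]; ring
  rw [this]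
  exact key _

lemma grid_preconnected [NeZero m] : (gridGraph d m).Preconnected := by
  intro u v
  have : ∀ s : Finset (Fin d), ∀ u v : GridV d m, (∀ i, i ∉ s → u i = v i) →
      (gridGraph d m).Reachable u v := by
    intro s
    induction s using Finset.induction with
    | empty =>
        intro u v h
        have : u = v := funext fun i => h i (Finset.notMem_empty i)
        rw [this]
    | @insert i s his ih =>
        intro u v h
        refine (reach_update u i (v i)).trans (ih _ _ fun j hj => ?_)
        by_cases hji : j = i
        · subst hji; simp
        · rw [Function.update_of_ne hji]
          exact h j (by simp [hji, hj])
  exact this Finset.univ u v (fun i hi => absurd (Finset.mem_univ i) hi)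

lemma rho_le_dist [NeZero m] (u v : GridV d m) (i : Fin d) :
    rho (v i - u i) ≤ (gridGraph d m).dist u v := by
  obtain ⟨W, hW⟩ := (grid_preconnected u v).exists_walk_length_eq_dist
  rw [← hW]; exact walk_rho W i

lemma one_le_dist [NeZero m] {u v : GridV d m} (h : u ≠ v) :
    1 ≤ (gridGraph d m).dist u v :=
  (grid_preconnected u v).pos_dist_of_ne h

lemma exists_dist_one (hm : 2 ≤ m) (hd : 1 ≤ d) (u : GridV d m) :
    ∃ v : GridV d m, v ≠ u ∧ (gridGraph d m).dist u v = 1 := by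
  haveI : NeZero m := ⟨by omega⟩
  set i : Fin d := ⟨0, hd⟩
  have hne : Function.update u i (u i + 1) ≠ u := by
    intro h
    have h0 := congrFun h i
    rw [Function.update_self] at h0
    have h1 : (1 : ZMod m) = 0 := add_eq_left.mp h0
    have h2 : m ∣ 1 := by
      rw [← ZMod.natCast_eq_zero_iff 1 m, Nat.cast_one]
      exact h1
    rw [Nat.dvd_one] at h2; omega
  refine ⟨Function.update u i (u i + 1), hne, ?_⟩
  rw [SimpleGraph.dist_eq_one_iff_adj]
  exact adj_update u i hne (Or.inl rfl)


noncomputable def gfun (t : ℝ) (r : ℕ) : ℝ≥0∞ := ((max r 1 : ℕ) : ℝ≥0∞) ^ (-t)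

noncomputable def Ct (t : ℝ) : ℝ≥0∞ := ENNReal.ofReal (∑' k : ℕ, ((k : ℝ) + 1) ^ (-t))

lemma summable_aux {t : ℝ} (ht : 1 < t) : Summable (fun k : ℕ => ((k : ℝ) + 1) ^ (-t)) := by
  have h : Summable (fun k : ℕ => ((k : ℝ)) ^ (-t)) := Real.summable_nat_rpow.mpr (by linarith)
  have := (summable_nat_add_iff (f := fun k : ℕ => ((k : ℝ)) ^ (-t)) 1).mpr h
  refine this.congr fun k => ?_
  push_cast
  ring_nf

lemma gfun_succ (t : ℝ) (j : ℕ) :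
    gfun t (j + 1) = ENNReal.ofReal (((j : ℝ) + 1) ^ (-t)) := by
  rw [gfun, Nat.max_eq_left (Nat.le_add_left 1 j)]
  rw [← ENNReal.ofReal_natCast (j+1), ENNReal.ofReal_rpow_of_pos (by positivity)]
  push_cast
  ring_nf

lemma prefix_le {t : ℝ} (ht : 1 < t) (N : ℕ) :
    ∑ j ∈ Finset.range N, gfun t (j + 1) ≤ Ct t := by
  have h1 : ∑ j ∈ Finset.range N, gfun t (j + 1) =
      ENNReal.ofReal (∑ j ∈ Finset.range N, ((j : ℝ) + 1) ^ (-t)) := by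
    rw [ENNReal.ofReal_sum_of_nonneg fun i _ => Real.rpow_nonneg (by positivity) _]
    exact Finset.sum_congr rfl fun j _ => gfun_succ t j
  rw [h1, Ct]
  apply ENNReal.ofReal_le_ofReal
  exact Summable.sum_le_tsum _ (fun i _ => Real.rpow_nonneg (by positivity) _) (summable_aux ht)

lemma gfun_zero (t : ℝ) : gfun t 0 = 1 := by
  simp [gfun]

lemma gfun_le_of_le {t : ℝ} (ht : 0 ≤ t) {a b : ℕ} (h : a ≤ b) : gfun t b ≤ gfun t a := by
  rw [gfun, gfun, ENNReal.rpow_neg, ENNReal.rpow_neg]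
  apply ENNReal.inv_le_inv.mpr
  apply ENNReal.rpow_le_rpow _ ht
  have : max a 1 ≤ max b 1 := by omega
  exact_mod_cast Nat.cast_le.mpr this

/-- the one-dimensional sum bound -/
lemma sum_gfun_le {m : ℕ} [NeZero m] {t : ℝ} (ht : 1 < t) :
    ∑ z : ZMod m, gfun t (rho z) ≤ (1 + Ct t) + Ct t := by
  have hstep : ∀ z : ZMod m, gfun t (rho z) ≤ gfun t z.val + gfun t (m - z.val) := by
    intro z
    rcases rho_cases z with h | h <;> rw [h]
    · exact le_add_of_le_of_nonneg le_rfl zero_le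
    · exact le_add_of_nonneg_of_le zero_le le_rfl
  calc ∑ z : ZMod m, gfun t (rho z)
      ≤ ∑ z : ZMod m, (gfun t z.val + gfun t (m - z.val)) := Finset.sum_le_sum fun z _ => hstep z
    _ = (∑ z : ZMod m, gfun t z.val) + ∑ z : ZMod m, gfun t (m - z.val) := Finset.sum_add_distrib
    _ ≤ (1 + Ct t) + Ct t := by
        gcongr
        · -- ∑ z, gfun t z.val = ∑ k in range m, gfun t k ≤ 1 + Ct
          have he : ∑ z : ZMod m, gfun t z.val = ∑ k ∈ Finset.range m, gfun t k := by
            refine Finset.sum_nbij' (fun z => z.val) (fun k => (k : ZMod m)) ?_ ?_ ?_ ?_ ?_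
            · intro z _; exact Finset.mem_range.mpr (ZMod.val_lt z)
            · intro k hk; exact Finset.mem_univ _
            · intro z _; exact (ZMod.natCast_rightInverse z)
            · intro k hk; exact ZMod.val_cast_of_lt (Finset.mem_range.mp hk)
            · intro z _; rfl
          rw [he]
          obtain ⟨M, hM⟩ : ∃ M, m = M + 1 := ⟨m - 1, by have := NeZero.pos m; omega⟩
          rw [hM, Finset.sum_range_succ', gfun_zero, add_comm]
          gcongr
          exact prefix_le ht M
        · -- ∑ z, gfun t (m - z.val) ≤ Ct
          have he : ∑ z : ZMod m, gfun t (m - z.val) = ∑ k ∈ Finset.range m, gfun t (m - k) := by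
            refine Finset.sum_nbij' (fun z => z.val) (fun k => (k : ZMod m)) ?_ ?_ ?_ ?_ ?_
            · intro z _; exact Finset.mem_range.mpr (ZMod.val_lt z)
            · intro k hk; exact Finset.mem_univ _
            · intro z _; exact (ZMod.natCast_rightInverse z)
            · intro k hk; exact ZMod.val_cast_of_lt (Finset.mem_range.mp hk)
            · intro z _; rfl
          rw [he]
          have hre : ∑ k ∈ Finset.range m, gfun t (m - k) =
              ∑ j ∈ Finset.range m, gfun t (j + 1) := by
            rw [← Finset.sum_range_reflect (fun j => gfun t (j + 1)) m]
            refine Finset.sum_congr rfl fun k hk => ?_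
            have hk' := Finset.mem_range.mp hk
            congr 1
            omega
          rw [hre]
          exact prefix_le ht m


variable {d : ℕ} {n' : ℕ+} {γ : ℝ}


lemma weight_le_one [NeZero ((n' : ℕ))] (hγ : 0 ≤ γ) (u v : GridV d n') :
    kswWeight d n' γ u v ≤ 1 := by
  rw [kswWeight]
  split_ifs with h
  · exact zero_le_one
  · have h1 : (1 : ℝ≥0∞) ≤ ((gridGraph d n').dist u v : ℝ≥0∞) := by
      exact_mod_cast one_le_dist (fun he => h he.symm)
    rw [ENNReal.rpow_neg]
    refine ENNReal.inv_le_one.mpr ?_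
    calc (1:ℝ≥0∞) = 1 ^ γ := (ENNReal.one_rpow γ).symm
      _ ≤ _ := ENNReal.rpow_le_rpow h1 hγ

lemma one_le_Z (hm : 2 ≤ (n' : ℕ)) (hd : 1 ≤ d) (u : GridV d n') :
    1 ≤ ∑ v : GridV d n', kswWeight d n' γ u v := by
  obtain ⟨v, hvu, hv⟩ := exists_dist_one hm hd u
  have : kswWeight d n' γ u v = 1 := by
    rw [kswWeight, if_neg hvu, hv]
    simp [ENNReal.one_rpow]
  calc (1 : ℝ≥0∞) = kswWeight d n' γ u v := this.symm
    _ ≤ _ := Finset.single_le_sum (f := fun v => kswWeight d n' γ u v)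
        (fun _ _ => zero_le) (Finset.mem_univ v)

lemma Z_ne_top [NeZero ((n' : ℕ))] (hγ : 0 ≤ γ) (u : GridV d n') :
    (∑ v : GridV d n', kswWeight d n' γ u v) ≠ ⊤ := by
  refine ne_top_of_le_ne_top ?_ (Finset.sum_le_sum fun v _ => weight_le_one hγ u v)
  simp [Finset.sum_const]

lemma coord_apply (u : GridV d n') (S : Set (GridV d n')) :
    kswCoordMeasure d n' γ u S =
      (∑ v : GridV d n', kswWeight d n' γ u v)⁻¹ *
        ∑ v : GridV d n', kswWeight d n' γ u v * S.indicator 1 v := by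
  rw [kswCoordMeasure, Measure.smul_apply, smul_eq_mul]
  congr 1
  rw [Measure.coe_finset_sum]
  simp only [Finset.sum_apply, Measure.smul_apply, smul_eq_mul]
  exact Finset.sum_congr rfl fun v _ => by
    rw [Measure.dirac_apply' v MeasurableSpace.measurableSet_top]

lemma isProb (hm : 2 ≤ (n' : ℕ)) (hd : 1 ≤ d) (hγ : 0 ≤ γ) (u : GridV d n') :
    IsProbabilityMeasure (kswCoordMeasure d n' γ u) := by
  haveI : NeZero ((n' : ℕ)) := ⟨by omega⟩
  constructor
  rw [coord_apply]
  simp only [Set.indicator_univ, Pi.one_apply, mul_one]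
  exact ENNReal.inv_mul_cancel
    (fun h0 => by simpa [h0] using one_le_Z (γ := γ) hm hd u)
    (Z_ne_top hγ u)

lemma coord_le (hm : 2 ≤ (n' : ℕ)) (hd : 1 ≤ d) (u : GridV d n') (S : Set (GridV d n')) :
    kswCoordMeasure d n' γ u S ≤ ∑ v : GridV d n', kswWeight d n' γ u v * S.indicator 1 v := by
  rw [coord_apply]
  calc _ ≤ 1 * ∑ v : GridV d n', kswWeight d n' γ u v * S.indicator 1 v := by
        gcongr
        exact ENNReal.inv_le_one.mpr (one_le_Z hm hd u)
    _ = _ := one_mul _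

lemma marginal (hm : 2 ≤ (n' : ℕ)) (hd : 1 ≤ d) (hγ : 0 ≤ γ) (u : GridV d n')
    (S : Set (GridV d n')) :
    kswMeasure d n' γ (Function.eval u ⁻¹' S) = kswCoordMeasure d n' γ u S := by
  haveI := fun w : GridV d n' => isProb hm hd hγ w
  have hS : Function.eval u ⁻¹' S =
      Set.univ.pi (Function.update (fun _ : GridV d n' => (Set.univ : Set (GridV d n'))) u S) :=
    (Set.univ_pi_update_univ (ι := GridV d n') (α := fun _ => GridV d n') u S).symm
  rw [kswMeasure, hS, Measure.pi_pi]
  rw [Fintype.prod_eq_single (f := fun i => kswCoordMeasure d n' γ i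
        (Function.update (fun _ => (Set.univ : Set (GridV d n'))) u S i)) u
      (fun i hi => by simp only [Function.update_of_ne hi]; exact measure_univ)]
  simp only [Function.update_self]


lemma rpow_le_rpow_of_nonpos {x y : ℝ≥0∞} {c : ℝ} (hc : c ≤ 0) (h : x ≤ y) :
    y ^ c ≤ x ^ c := by
  have : c = -(-c) := by ring
  rw [this, ENNReal.rpow_neg y, ENNReal.rpow_neg x]
  exact ENNReal.inv_le_inv.mpr (ENNReal.rpow_le_rpow h (by linarith))

lemma weight_bound {d m : ℕ} [NeZero m] {γ t : ℝ} (ht : 0 < t)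
    (hs : (d : ℝ) * t ≤ γ) {u v : GridV d m} (hne : v ≠ u) {oT : ℝ≥0∞}
    (hoT : oT ≤ (((gridGraph d m).dist u v : ℕ) : ℝ≥0∞)) :
    kswWeight d m γ u v ≤ oT ^ ((d : ℝ) * t - γ) * ∏ j : Fin d, gfun t (rho (v j - u j)) := by
  set D : ℝ≥0∞ := (((gridGraph d m).dist u v : ℕ) : ℝ≥0∞) with hD
  have hD1 : (1 : ℝ≥0∞) ≤ D := by
    rw [hD]; exact_mod_cast one_le_dist (fun h => hne h.symm)
  have hD0 : D ≠ 0 := by intro h; rw [h] at hD1; simp at hD1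
  have hDt : D ≠ ⊤ := ENNReal.natCast_ne_top _
  have hw : kswWeight d m γ u v = D ^ (-γ) := by rw [kswWeight, if_neg hne]
  have hsplit : D ^ (-γ) = D ^ ((d : ℝ) * t - γ) * D ^ (-((d : ℝ) * t)) := by
    rw [← ENNReal.rpow_add _ _ hD0 hDt]; ring_nf
  rw [hw, hsplit]
  refine mul_le_mul' (rpow_le_rpow_of_nonpos (by linarith) hoT) ?_
  have h1 : ∏ j : Fin d, ((max (rho (v j - u j)) 1 : ℕ) : ℝ≥0∞) ≤ D ^ ((d : ℝ)) := by
    calc ∏ j : Fin d, ((max (rho (v j - u j)) 1 : ℕ) : ℝ≥0∞)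
        ≤ ∏ _j : Fin d, D := by
          refine Finset.prod_le_prod' fun j _ => ?_
          have h2 : max (rho (v j - u j)) 1 ≤ (gridGraph d m).dist u v :=
            max_le (rho_le_dist u v j) (one_le_dist (fun h => hne h.symm))
          rw [hD]; exact_mod_cast h2
      _ = D ^ (d : ℕ) := by rw [Finset.prod_const, Finset.card_univ, Fintype.card_fin]
      _ = D ^ ((d : ℝ)) := (ENNReal.rpow_natCast D d).symm
  have h2 : D ^ (-((d : ℝ) * t)) = (D ^ ((d : ℝ))) ^ (-t) := by
    rw [← ENNReal.rpow_mul]; ring_nf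
  rw [h2]
  calc (D ^ ((d : ℝ))) ^ (-t)
        ≤ (∏ j : Fin d, ((max (rho (v j - u j)) 1 : ℕ) : ℝ≥0∞)) ^ (-t) :=
          rpow_le_rpow_of_nonpos (by linarith) h1
      _ = ∏ j : Fin d, ((max (rho (v j - u j)) 1 : ℕ) : ℝ≥0∞) ^ (-t) :=
          (ENNReal.prod_rpow_of_ne_top (fun j _ => ENNReal.natCast_ne_top _) _).symm
      _ = ∏ j : Fin d, gfun t (rho (v j - u j)) := rfl

lemma sum_prod_gfun {d m : ℕ} [NeZero m] (t : ℝ) (u : GridV d m) :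
    ∑ v : GridV d m, ∏ j : Fin d, gfun t (rho (v j - u j)) =
      (∑ z : ZMod m, gfun t (rho z)) ^ d := by
  have h1 : ∀ j : Fin d, ∑ x : ZMod m, gfun t (rho (x - u j)) = ∑ z : ZMod m, gfun t (rho z) :=
    fun j => Fintype.sum_equiv (Equiv.subRight (u j)) _ _ (fun x => rfl)
  calc ∑ v : GridV d m, ∏ j : Fin d, gfun t (rho (v j - u j))
      = ∏ j : Fin d, ∑ x : ZMod m, gfun t (rho (x - u j)) := by
        rw [Finset.prod_univ_sum]
        rw [Fintype.piFinset_univ]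
    _ = ∏ j : Fin d, ∑ z : ZMod m, gfun t (rho z) := Finset.prod_congr rfl fun j _ => h1 j
    _ = _ := by rw [Finset.prod_const, Finset.card_univ, Fintype.card_fin]


end KSWAux


/-- In `KSW(n,d,γ)` with `γ > 2d`: for any fixed `ε > 0`, the probability
that some long-range edge connects two vertices at grid distance greater than
`n^(1/(γ-d)+ε)` (where `n = n'^d`) tends to `0` as `n → ∞`. -/
theorem ksw_no_long_jumps (d : ℕ) (hd : 1 ≤ d) (γ : ℝ) (hγ : 2 * (d : ℝ) < γ)
    (ε : ℝ) (hε : 0 < ε) :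
    Filter.Tendsto
      (fun n' : ℕ+ =>
        kswMeasure d n' γ
          {σ | ∃ u : GridV d n',
            (((n' : ℕ) : ℝ) ^ d) ^ ((1 : ℝ) / (γ - d) + ε) <
              ((gridGraph d n').dist u (σ u) : ℝ)})
      Filter.atTop (nhds 0) := by
  classical
  have hd0 : (0:ℝ) < d := by exact_mod_cast hd
  have hγd : (0:ℝ) < γ - d := by linarith
  set e : ℝ := (1:ℝ)/(γ - d) + ε with he_def
  have he : 0 < e := by positivity
  set δ : ℝ := ε * (γ - d) / (2 * e) with hδ_def
  have hδ : 0 < δ := by positivity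
  have heε : ε ≤ e := by
    have h1 : 0 < (1:ℝ)/(γ - d) := by positivity
    rw [he_def]; linarith
  have hδγ : δ < γ - d := by
    rw [hδ_def, div_lt_iff₀ (by positivity)]
    nlinarith
  set t : ℝ := ((d:ℝ) + δ)/(d:ℝ) with ht_def
  have hdt : (d:ℝ) * t = (d:ℝ) + δ := by rw [ht_def]; field_simp
  have ht1 : 1 < t := by rw [ht_def, lt_div_iff₀ hd0]; linarith
  have ht0 : 0 < t := by linarith
  have hγ0 : 0 ≤ γ := by linarith
  have hsγ : (d:ℝ) * t ≤ γ := by rw [hdt]; linarith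
  set K : ℝ≥0∞ := (1 + KSWAux.Ct t) + KSWAux.Ct t with hK_def
  have hCtne : KSWAux.Ct t ≠ ⊤ := ENNReal.ofReal_ne_top
  have hKne : K ≠ ⊤ := by
    rw [hK_def]
    exact ENNReal.add_ne_top.mpr ⟨ENNReal.add_ne_top.mpr ⟨ENNReal.one_ne_top, hCtne⟩, hCtne⟩
  set a : ℝ := (d:ℝ) + ((d:ℝ)*e)*(((d:ℝ) + δ) - γ) with ha_def
  have hec : e * (γ - d) = 1 + ε*(γ-d) := by
    rw [he_def]; field_simp
  have heδ : e * δ = ε*(γ-d)/2 := by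
    rw [hδ_def]; field_simp
  have ha : a < 0 := by
    have h3 : a = (d:ℝ)*(1 + e*δ - e*(γ-d)) := by rw [ha_def]; ring
    rw [h3, heδ, hec]
    nlinarith [mul_pos hd0 (mul_pos hε hγd)]
  -- the dominating function tends to zero
  have hcast : Filter.Tendsto (fun n' : ℕ+ => ((n' : ℕ) : ℝ)) Filter.atTop Filter.atTop := by
    apply Filter.tendsto_atTop_atTop_of_monotone
    · intro x y hxy
      have h1 : (x:ℕ) ≤ (y:ℕ) := hxy
      show ((x:ℕ):ℝ) ≤ ((y:ℕ):ℝ)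
      exact_mod_cast h1
    · intro b
      obtain ⟨k, hk⟩ := exists_nat_ge b
      exact ⟨⟨k+1, Nat.succ_pos k⟩, by show b ≤ ((k+1:ℕ):ℝ); push_cast; linarith⟩
  have hreal : Filter.Tendsto (fun n' : ℕ+ => (((n':ℕ):ℝ)) ^ a) Filter.atTop (nhds 0) := by
    have h1 := (tendsto_rpow_neg_atTop (y := -a) (by linarith)).comp hcast
    simpa [neg_neg, Function.comp_def] using h1
  have hB : Filter.Tendsto (fun n' : ℕ+ => K ^ d * ENNReal.ofReal (((n':ℕ):ℝ) ^ a))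
      Filter.atTop (nhds 0) := by
    have h0 : Filter.Tendsto (fun n' : ℕ+ => ENNReal.ofReal (((n':ℕ):ℝ) ^ a))
        Filter.atTop (nhds 0) := by
      rw [← ENNReal.ofReal_zero]
      exact (ENNReal.continuous_ofReal.tendsto 0).comp hreal
    have h1 := ENNReal.Tendsto.const_mul (a := K ^ d) h0 (Or.inr (ENNReal.pow_ne_top hKne))
    simpa using h1
  refine tendsto_of_tendsto_of_tendsto_of_le_of_le' tendsto_const_nhds hB
    (Filter.Eventually.of_forall fun n' => zero_le) ?_
  filter_upwards [Filter.eventually_ge_atTop (2:ℕ+)] with n' hn2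
  have hm2 : 2 ≤ (n' : ℕ) := by exact_mod_cast hn2
  haveI : NeZero ((n':ℕ)) := ⟨by omega⟩
  have hm0 : (0:ℝ) < ((n':ℕ):ℝ) := by
    have : 0 < (n':ℕ) := by omega
    exact_mod_cast this
  set T : ℝ := (((n' : ℕ) : ℝ) ^ d) ^ e with hT_def
  have hT : 0 < T := Real.rpow_pos_of_pos (pow_pos hm0 d) e
  set S : GridV d n' → Set (GridV d n') :=
    fun u => {v | T < ((gridGraph d n').dist u v : ℝ)} with hS_def
  have hEvent : {σ : GridV d n' → GridV d n' |
      ∃ u, T < ((gridGraph d n').dist u (σ u) : ℝ)} = ⋃ u, Function.eval u ⁻¹' S u := by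
    ext σ
    simp only [Set.mem_setOf_eq, Set.mem_iUnion, Set.mem_preimage, hS_def, Function.eval]
  rw [hEvent]
  have per_u : ∀ u : GridV d n', kswCoordMeasure d n' γ u (S u) ≤
      (ENNReal.ofReal T) ^ ((d:ℝ)*t - γ) * K ^ d := by
    intro u
    calc kswCoordMeasure d n' γ u (S u)
        ≤ ∑ v : GridV d n', kswWeight d n' γ u v * (S u).indicator 1 v :=
          KSWAux.coord_le hm2 hd u (S u)
      _ ≤ ∑ v : GridV d n', (ENNReal.ofReal T) ^ ((d:ℝ)*t - γ) *
            ∏ j : Fin d, KSWAux.gfun t (KSWAux.rho (v j - u j)) := by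
          refine Finset.sum_le_sum fun v _ => ?_
          by_cases hv : v ∈ S u
          · rw [Set.indicator_of_mem hv]
            simp only [Pi.one_apply, mul_one]
            have hlt : T < (((gridGraph d n').dist u v : ℕ) : ℝ) := hv
            have hvu : v ≠ u := by
              intro h
              subst h
              rw [SimpleGraph.dist_self] at hlt
              norm_num at hlt
              exact absurd hlt (not_lt.mpr hT.le)
            refine KSWAux.weight_bound ht0 hsγ hvu ?_
            calc ENNReal.ofReal T
                ≤ ENNReal.ofReal (((gridGraph d n').dist u v : ℕ) : ℝ) :=
                  ENNReal.ofReal_le_ofReal hlt.le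
              _ = _ := ENNReal.ofReal_natCast _
          · rw [Set.indicator_of_notMem hv, mul_zero]; exact zero_le
      _ = (ENNReal.ofReal T) ^ ((d:ℝ)*t - γ) *
            ∑ v : GridV d n', ∏ j : Fin d, KSWAux.gfun t (KSWAux.rho (v j - u j)) := by
          rw [← Finset.mul_sum]
      _ = (ENNReal.ofReal T) ^ ((d:ℝ)*t - γ) *
            (∑ z : ZMod (n':ℕ), KSWAux.gfun t (KSWAux.rho z)) ^ d := by
          rw [KSWAux.sum_prod_gfun]
      _ ≤ _ := by
          gcongr
          exact hK_def ▸ KSWAux.sum_gfun_le ht1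
  calc kswMeasure d n' γ (⋃ u, Function.eval u ⁻¹' S u)
      ≤ ∑' u : GridV d n', kswMeasure d n' γ (Function.eval u ⁻¹' S u) := measure_iUnion_le _
    _ = ∑ u : GridV d n', kswMeasure d n' γ (Function.eval u ⁻¹' S u) := tsum_fintype _
    _ = ∑ u : GridV d n', kswCoordMeasure d n' γ u (S u) :=
        Finset.sum_congr rfl fun u _ => KSWAux.marginal hm2 hd hγ0 u (S u)
    _ ≤ ∑ _u : GridV d n', ((ENNReal.ofReal T) ^ ((d:ℝ)*t - γ) * K ^ d) :=
        Finset.sum_le_sum fun u _ => per_u u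
    _ = (Fintype.card (GridV d n') : ℝ≥0∞) *
          ((ENNReal.ofReal T) ^ ((d:ℝ)*t - γ) * K ^ d) := by
        rw [Finset.sum_const, Finset.card_univ, nsmul_eq_mul]
    _ ≤ K ^ d * ENNReal.ofReal (((n':ℕ):ℝ) ^ a) := by
        have hcard : (Fintype.card (GridV d n') : ℝ≥0∞) = (((n':ℕ)^d : ℕ) : ℝ≥0∞) := by
          rw [Fintype.card_fun, ZMod.card, Fintype.card_fin]
        have hkey : (((n':ℕ)^d : ℕ) : ℝ≥0∞) * (ENNReal.ofReal T) ^ ((d:ℝ)*t - γ) =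
            ENNReal.ofReal (((n':ℕ):ℝ) ^ a) := by
          rw [ENNReal.ofReal_rpow_of_pos hT, ← ENNReal.ofReal_natCast ((n':ℕ)^d),
            ← ENNReal.ofReal_mul (by positivity)]
          congr 1
          have h1 : (((n':ℕ)^d : ℕ) : ℝ) = ((n':ℕ):ℝ) ^ (d:ℝ) := by
            push_cast
            rw [Real.rpow_natCast]
          rw [h1, hT_def, ← Real.rpow_natCast (((n':ℕ)):ℝ) d,
            ← Real.rpow_mul hm0.le, ← Real.rpow_mul hm0.le, ← Real.rpow_add hm0]
          rw [hdt, ha_def]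
        rw [hcard, ← mul_assoc, hkey, mul_comm]
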